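/- Let A be a unital C*-algebra and a ∈ A a positive element. Then a is invertible in A if and only if the seminorm r_a is equivalent to the dual norm on hermitian continuous linear functionals, i.e. there exist constants c, C > 0 such that c · ‖f‖ ≤ r_a(f) ≤ C · ‖f‖ for every hermitian continuous linear functional f on A. -/

import Mathlib

open scoped ComplexOrder NNReal

variable {A : Type*} [CStarAlgebra A] [PartialOrder A] [StarOrderedRing A]

/-- A continuous linear functional on a C*-algebra is positive if it is nonnegative on
positive elements (using the complex order). -/
def IsPosFunctional {A : Type*} [CStarAlgebra A] [PartialOrder A] [StarOrderedRing A]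
    (f : A →L[ℂ] ℂ) : Prop :=
  ∀ x : A, 0 ≤ x → 0 ≤ f x

/-- A continuous linear functional is hermitian if `f (star x) = conj (f x)` for all `x`. -/
def IsHermitianFunctional {A : Type*} [CStarAlgebra A] (f : A →L[ℂ] ℂ) : Prop :=
  ∀ x : A, f (star x) = starRingEnd ℂ (f x)

open Complex ComplexStarModule

lemma re_coe (z : ℂ) (h : z.im = 0) : z = (z.re : ℂ) :=
  (Complex.conj_eq_iff_re.mp (Complex.conj_eq_iff_im.mpr h)).symm

lemma norm_re_le (x : A) : ‖(ℜ x : A)‖ ≤ ‖x‖ := by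
  rw [realPart_apply_coe, norm_smul]
  have := norm_add_le x (star x)
  rw [norm_star] at this
  rw [Real.norm_eq_abs]
  have h2 : |(2:ℝ)⁻¹| * ‖x + star x‖ ≤ |(2:ℝ)⁻¹| * (‖x‖ + ‖x‖) := by
    gcongr
  calc |(2:ℝ)⁻¹| * ‖x + star x‖ ≤ |(2:ℝ)⁻¹| * (‖x‖ + ‖x‖) := h2
  _ = ‖x‖ := by rw [abs_of_pos (by norm_num : (0:ℝ) < (2:ℝ)⁻¹)]; ring

lemma norm_im_le (x : A) : ‖(ℑ x : A)‖ ≤ ‖x‖ := by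
  have h : (ℜ (Complex.I • x) : A) = -(ℑ x : A) := by simp
  have := norm_re_le (Complex.I • x)
  rw [h, norm_neg, norm_smul] at this
  simpa using this

lemma isHermitian_of_real_on_sa (f : A →L[ℂ] ℂ)
    (h : ∀ x : A, IsSelfAdjoint x → (f x).im = 0) : IsHermitianFunctional f := by
  intro x
  have hx : x = (ℜ x : A) + Complex.I • (ℑ x : A) := (realPart_add_I_smul_imaginaryPart x).symm
  have hsx : star x = (ℜ x : A) - Complex.I • (ℑ x : A) := by
    conv_lhs => rw [hx]
    rw [star_add, star_smul, (ℜ x).2.star_eq, (ℑ x).2.star_eq]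
    simp [Complex.star_def, sub_eq_add_neg]
  have h1 : (f (ℜ x : A)).im = 0 := h _ (ℜ x).2
  have h2 : (f (ℑ x : A)).im = 0 := h _ (ℑ x).2
  have e1 : f x = f (ℜ x : A) + Complex.I * f (ℑ x : A) := by
    conv_lhs => rw [hx]
    rw [map_add, map_smul, smul_eq_mul]
  have e2 : f (star x) = f (ℜ x : A) - Complex.I * f (ℑ x : A) := by
    rw [hsx, map_sub, map_smul, smul_eq_mul]
  rw [e1, e2]
  apply Complex.ext <;> simp [h1, h2]

lemma IsPosFunctional.im_eq_zero {f : A →L[ℂ] ℂ} (hf : IsPosFunctional f) {x : A}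
    (hx : IsSelfAdjoint x) : (f x).im = 0 := by
  have h1 : 0 ≤ f (x⁺) := hf _ (CFC.posPart_nonneg x)
  have h2 : 0 ≤ f (x⁻) := hf _ (CFC.negPart_nonneg x)
  rw [Complex.le_def] at h1 h2
  have hx' : f x = f (x⁺) - f (x⁻) := by rw [← map_sub, CFC.posPart_sub_negPart x hx]
  rw [hx']
  simp [Complex.sub_im, ← h1.2, ← h2.2]

lemma IsPosFunctional.isHermitian {f : A →L[ℂ] ℂ} (hf : IsPosFunctional f) :
    IsHermitianFunctional f :=
  isHermitian_of_real_on_sa f fun _ hx => hf.im_eq_zero hx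

lemma herm_real {f : A →L[ℂ] ℂ} (hf : IsHermitianFunctional f) {x : A}
    (hx : IsSelfAdjoint x) : f x = ((f x).re : ℂ) := by
  have := hf x
  rw [hx.star_eq] at this
  exact (Complex.conj_eq_iff_re.mp this.symm).symm

lemma IsPosFunctional.mono {f : A →L[ℂ] ℂ} (hf : IsPosFunctional f) {x y : A}
    (h : x ≤ y) : f x ≤ f y := by
  have := hf _ (sub_nonneg.2 h)
  rw [map_sub] at this
  exact sub_nonneg.mp this

lemma algebra_apply (f : A →L[ℂ] ℂ) (r : ℝ) : f (algebraMap ℝ A r) = (r : ℂ) * f 1 := by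
  rw [Algebra.algebraMap_eq_smul_one, ← Complex.coe_smul, map_smul, smul_eq_mul]

lemma IsPosFunctional.one_re_nonneg {f : A →L[ℂ] ℂ} (hf : IsPosFunctional f) :
    0 ≤ (f 1).re ∧ (f 1).im = 0 := by
  have := hf 1 zero_le_one
  rw [Complex.le_def] at this
  exact ⟨this.1, this.2.symm⟩

lemma IsPosFunctional.norm_apply_le {f : A →L[ℂ] ℂ} (hf : IsPosFunctional f) {x : A}
    (hx : IsSelfAdjoint x) : ‖f x‖ ≤ (f 1).re * ‖x‖ := by
  have h1 : f x ≤ (‖x‖ : ℂ) * f 1 := by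
    rw [← algebra_apply]; exact hf.mono hx.le_algebraMap_norm_self
  have h2 : -((‖x‖ : ℂ) * f 1) ≤ f x := by
    rw [← algebra_apply, ← map_neg]; exact hf.mono hx.neg_algebraMap_norm_le_self
  rw [Complex.le_def] at h1 h2
  obtain ⟨h1e, h1i⟩ := h1
  obtain ⟨h2e, h2i⟩ := h2
  have him : (f 1).im = 0 := hf.one_re_nonneg.2
  have hxim : (f x).im = 0 := by
    rw [h1i]; simp [Complex.mul_im, him]
  rw [re_coe _ hxim, Complex.norm_real, Real.norm_eq_abs, abs_le]
  constructor
  · have : (-((‖x‖:ℂ) * f 1)).re = -(‖x‖ * (f 1).re) := by simp [Complex.mul_re, him]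
    rw [this] at h2e
    linarith [h2e]
  · have : ((‖x‖:ℂ) * f 1).re = ‖x‖ * (f 1).re := by simp [Complex.mul_re, him]
    rw [this] at h1e
    linarith [h1e]

lemma norm_sub_le_two {f₁ f₂ : A →L[ℂ] ℂ} (h₁ : IsPosFunctional f₁) (h₂ : IsPosFunctional f₂) :
    ‖f₁ - f₂‖ ≤ 2 * ((f₁ 1).re + (f₂ 1).re) := by
  have hF1 := h₁.one_re_nonneg.1
  have hF2 := h₂.one_re_nonneg.1
  refine ContinuousLinearMap.opNorm_le_bound _ (by linarith) fun x => ?_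
  set g := f₁ - f₂ with hg
  have key : ∀ y : A, IsSelfAdjoint y → ‖g y‖ ≤ ((f₁ 1).re + (f₂ 1).re) * ‖y‖ := by
    intro y hy
    have : g y = f₁ y - f₂ y := by simp [hg]
    rw [this]
    calc ‖f₁ y - f₂ y‖ ≤ ‖f₁ y‖ + ‖f₂ y‖ := norm_sub_le _ _
    _ ≤ (f₁ 1).re * ‖y‖ + (f₂ 1).re * ‖y‖ := add_le_add (h₁.norm_apply_le hy) (h₂.norm_apply_le hy)
    _ = ((f₁ 1).re + (f₂ 1).re) * ‖y‖ := by ring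
  have hgx : g x = g (ℜ x : A) + Complex.I * g (ℑ x : A) := by
    conv_lhs => rw [← realPart_add_I_smul_imaginaryPart x]
    rw [map_add, map_smul, smul_eq_mul]
  calc ‖g x‖ ≤ ‖g (ℜ x : A)‖ + ‖Complex.I * g (ℑ x : A)‖ := hgx ▸ norm_add_le _ _
  _ = ‖g (ℜ x : A)‖ + ‖g (ℑ x : A)‖ := by simp
  _ ≤ ((f₁ 1).re + (f₂ 1).re) * ‖(ℜ x : A)‖ + ((f₁ 1).re + (f₂ 1).re) * ‖(ℑ x : A)‖ :=
      add_le_add (key _ (ℜ x).2) (key _ (ℑ x).2)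
  _ ≤ ((f₁ 1).re + (f₂ 1).re) * ‖x‖ + ((f₁ 1).re + (f₂ 1).re) * ‖x‖ := by
      gcongr
      · exact norm_re_le x
      · exact norm_im_le x
  _ = 2 * ((f₁ 1).re + (f₂ 1).re) * ‖x‖ := by ring


lemma exists_decomp [Nontrivial A] (f : A →L[ℂ] ℂ) (hf : IsHermitianFunctional f) :
    ∃ f₁ f₂ : A →L[ℂ] ℂ, IsPosFunctional f₁ ∧ IsPosFunctional f₂ ∧ f = f₁ - f₂ ∧
      (f₁ 1).re + (f₂ 1).re ≤ 3 * ‖f‖ := by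
  set C := ‖f‖ with hC
  set T : A → Set ℝ := fun x =>
    {r | ∃ w z : A, 0 ≤ w ∧ w ≤ z ∧ r = C * ‖(ℜ x : A) + z‖ - (f w).re} with hT
  have hmem : ∀ x, C * ‖(ℜ x : A)‖ ∈ T x := fun x =>
    ⟨0, 0, le_refl 0, le_refl 0, by simp⟩
  have key : ∀ w z : A, 0 ≤ w → w ≤ z → (f w).re ≤ C * ‖z‖ := by
    intro w z hw hwz
    calc (f w).re ≤ ‖f w‖ := by exact Complex.re_le_norm _
    _ ≤ C * ‖w‖ := f.le_opNorm w
    _ ≤ C * ‖z‖ := by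
        have := CStarAlgebra.norm_le_norm_of_nonneg_of_le hw hwz
        have hC0 : 0 ≤ C := norm_nonneg f
        nlinarith
  have hbdd : ∀ x r, r ∈ T x → -(C * ‖(ℜ x : A)‖) ≤ r := by
    rintro x r ⟨w, z, hw, hwz, rfl⟩
    have h1 : (f w).re ≤ C * ‖z‖ := key w z hw hwz
    have h2 : ‖z‖ ≤ ‖(ℜ x : A) + z‖ + ‖(ℜ x : A)‖ := by
      have hz : z = ((ℜ x : A) + z) - (ℜ x : A) := by abel
      calc ‖z‖ = ‖((ℜ x : A) + z) - (ℜ x : A)‖ := by rw [← hz]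
      _ ≤ ‖(ℜ x : A) + z‖ + ‖(ℜ x : A)‖ := norm_sub_le _ _
    have hC0 : 0 ≤ C := norm_nonneg f
    nlinarith
  set N : A → ℝ := fun x => sInf (T x) with hN
  have hTne : ∀ x, (T x).Nonempty := fun x => ⟨_, hmem x⟩
  have hTbdd : ∀ x, BddBelow (T x) := fun x => ⟨_, fun r hr => hbdd x r hr⟩
  have N_le : ∀ x r, r ∈ T x → N x ≤ r := fun x r hr => csInf_le (hTbdd x) hr
  have le_N : ∀ x b, (∀ r ∈ T x, b ≤ r) → b ≤ N x := fun x b h => le_csInf (hTne x) h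
  have N_le_norm : ∀ x, N x ≤ C * ‖x‖ := by
    intro x
    refine (N_le x _ (hmem x)).trans ?_
    have := norm_re_le x
    have hC0 : 0 ≤ C := norm_nonneg f
    nlinarith
  have N_add : ∀ x y, N (x + y) ≤ N x + N y := by
    intro x y
    have step : ∀ r ∈ T x, ∀ s ∈ T y, N (x + y) ≤ r + s := by
      rintro r ⟨w₁, z₁, hw₁, hwz₁, rfl⟩ s ⟨w₂, z₂, hw₂, hwz₂, rfl⟩
      have hmem' : C * ‖(ℜ (x + y) : A) + (z₁ + z₂)‖ - (f (w₁ + w₂)).re ∈ T (x + y) :=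
        ⟨w₁ + w₂, z₁ + z₂, add_nonneg hw₁ hw₂, add_le_add hwz₁ hwz₂, rfl⟩
      refine (N_le _ _ hmem').trans ?_
      have hre : (ℜ (x + y) : A) = (ℜ x : A) + (ℜ y : A) := by
        rw [map_add]; rfl
      have hnorm : ‖(ℜ (x + y) : A) + (z₁ + z₂)‖ ≤ ‖(ℜ x : A) + z₁‖ + ‖(ℜ y : A) + z₂‖ := by
        rw [hre]
        have : (ℜ x : A) + (ℜ y : A) + (z₁ + z₂) = ((ℜ x : A) + z₁) + ((ℜ y : A) + z₂) := by abel
        rw [this]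
        exact norm_add_le _ _
      have hfw : (f (w₁ + w₂)).re = (f w₁).re + (f w₂).re := by rw [map_add]; simp
      have hC0 : 0 ≤ C := norm_nonneg f
      rw [hfw]
      nlinarith
    have h1 : ∀ r ∈ T x, N (x + y) - N y ≤ r := by
      intro r hr
      have : N (x + y) - r ≤ N y := le_N _ _ (fun s hs => by linarith [step r hr s hs])
      linarith
    linarith [le_N x _ h1]
  have N_smul : ∀ (c : ℝ), 0 < c → ∀ x, N (c • x) = c * N x := by
    have step : ∀ (c : ℝ), 0 < c → ∀ x, N (c • x) ≤ c * N x := by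
      intro c hc x
      have hstep : ∀ r ∈ T x, N (c • x) ≤ c * r := by
        rintro r ⟨w, z, hw, hwz, rfl⟩
        have hle : c • w ≤ c • z := by
          have := smul_nonneg hc.le (sub_nonneg.2 hwz)
          rw [smul_sub] at this
          exact sub_nonneg.mp this
        have hre : (ℜ (c • x) : A) = c • (ℜ x : A) := by
          rw [map_smul]; rfl
        have hmem' : C * ‖(ℜ (c • x) : A) + c • z‖ - (f (c • w)).re ∈ T (c • x) :=
          ⟨c • w, c • z, smul_nonneg hc.le hw, hle, rfl⟩
        refine (N_le _ _ hmem').trans (le_of_eq ?_)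
        rw [hre, ← smul_add, norm_smul, Real.norm_eq_abs, abs_of_pos hc,
          f.map_smul_of_tower]
        have : ((c • f w).re) = c * (f w).re := by
          rw [Complex.real_smul]
          simp [Complex.mul_re]
        rw [this]
        ring
      have h1 : c⁻¹ * N (c • x) ≤ N x := by
        refine le_N _ _ (fun r hr => ?_)
        have h2 := hstep r hr
        calc c⁻¹ * N (c • x) ≤ c⁻¹ * (c * r) := by
              have : 0 ≤ c⁻¹ := by positivity
              nlinarith
        _ = r := by field_simp
      calc N (c • x) = c * (c⁻¹ * N (c • x)) := by field_simp
      _ ≤ c * N x := by nlinarith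
    intro c hc x
    refine le_antisymm (step c hc x) ?_
    have h3 := step c⁻¹ (by positivity) (c • x)
    rw [smul_smul, inv_mul_cancel₀ hc.ne', one_smul] at h3
    calc c * N x ≤ c * (c⁻¹ * N (c • x)) := by nlinarith
    _ = N (c • x) := by field_simp
  have hdom : ∀ x : ((⟨⊥, 0⟩ : A →ₗ.[ℝ] ℝ)).domain, (⟨⊥, 0⟩ : A →ₗ.[ℝ] ℝ) x ≤ N x := by
    rintro ⟨x, hx⟩
    rw [Submodule.mem_bot] at hx
    subst hx
    have h0 : (0 : ℝ) ≤ N 0 := by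
      refine le_N _ _ ?_
      rintro r ⟨w, z, hw, hwz, rfl⟩
      have := key w z hw hwz
      have hre : (ℜ (0 : A) : A) = 0 := by rw [map_zero]; rfl
      rw [hre, zero_add]
      linarith
    simpa using h0
  obtain ⟨g, -, hg⟩ := exists_extension_of_le_sublinear ⟨⊥, 0⟩ N N_smul N_add hdom
  -- facts about g
  have gb : ∀ x, |g x| ≤ C * ‖x‖ := by
    intro x
    rw [abs_le]
    constructor
    · have := (hg (-x)).trans (N_le_norm (-x))
      rw [map_neg, norm_neg] at this
      linarith
    · exact (hg x).trans (N_le_norm x)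
  have gpos : ∀ w : A, 0 ≤ w → (f w).re ≤ g w ∧ 0 ≤ g w := by
    intro w hw
    have hsa : star w = w := (IsSelfAdjoint.of_nonneg hw).star_eq
    have hrew : (ℜ (-w) : A) = -w := by
      rw [realPart_apply_coe, star_neg, hsa]
      rw [← two_smul ℝ (-w), smul_smul]
      norm_num
    have h1 : g (-w) ≤ -(f w).re := by
      have hmem' : C * ‖(ℜ (-w) : A) + w‖ - (f w).re ∈ T (-w) := ⟨w, w, hw, le_refl _, rfl⟩
      have := (hg (-w)).trans (N_le _ _ hmem')
      rwa [hrew, neg_add_cancel, norm_zero, mul_zero, zero_sub] at this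
    have h2 : g (-w) ≤ 0 := by
      have hmem' : C * ‖(ℜ (-w) : A) + w‖ - (f 0).re ∈ T (-w) := ⟨0, w, le_refl 0, hw, rfl⟩
      have := (hg (-w)).trans (N_le _ _ hmem')
      rwa [hrew, neg_add_cancel, norm_zero, mul_zero, map_zero, Complex.zero_re, sub_zero] at this
    rw [map_neg] at h1 h2
    constructor <;> linarith
  have gI : ∀ x : A, 0 ≤ x → g (Complex.I • x) = 0 := by
    intro x hx
    have hsa : star x = x := (IsSelfAdjoint.of_nonneg hx).star_eq
    have him : (ℑ x : A) = 0 := by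
      rw [imaginaryPart_apply_coe, hsa]
      simp
    have hre : (ℜ (Complex.I • x) : A) = 0 := by
      have : (ℜ (Complex.I • x) : A) = -(ℑ x : A) := by simp
      rw [this, him, neg_zero]
    have h1 : g (Complex.I • x) ≤ 0 := by
      have := (hg (Complex.I • x)).trans (N_le _ _ (hmem (Complex.I • x)))
      rwa [hre, norm_zero, mul_zero] at this
    have h2 : g (-(Complex.I • x)) ≤ 0 := by
      have hre' : (ℜ (-(Complex.I • x)) : A) = 0 := by
        rw [map_neg, NegMemClass.coe_neg, hre, neg_zero]
      have := (hg (-(Complex.I • x))).trans (N_le _ _ (hmem (-(Complex.I • x))))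
      rwa [hre', norm_zero, mul_zero] at this
    rw [map_neg] at h2
    linarith
  -- build the continuous functionals
  set g' : A →L[ℝ] ℝ := LinearMap.mkContinuous g C (fun x => by
    simpa [Real.norm_eq_abs] using gb x) with hg'
  have hg'app : ∀ x, g' x = g x := fun x => rfl
  set f₁ : A →L[ℂ] ℂ := g'.extendTo𝕜' with hf₁
  have hf₁apply : ∀ x, f₁ x = (g x : ℂ) - Complex.I * (g (Complex.I • x) : ℂ) := fun x =>
    ContinuousLinearMap.extendTo𝕜'_apply g' x
  have pos₁ : IsPosFunctional f₁ := by
    intro x hx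
    rw [hf₁apply, gI x hx]
    simpa using Complex.zero_le_real.2 (gpos x hx).2
  set f₂ : A →L[ℂ] ℂ := f₁ - f with hf₂
  have pos₂ : IsPosFunctional f₂ := by
    intro x hx
    have hfx : f x = ((f x).re : ℂ) := herm_real hf (IsSelfAdjoint.of_nonneg hx)
    have hval : f₂ x = ((g x - (f x).re : ℝ) : ℂ) := by
      rw [hf₂, ContinuousLinearMap.sub_apply, hf₁apply, gI x hx, hfx]
      push_cast [Complex.ofReal_re]
      ring
    rw [hval]
    exact Complex.zero_le_real.2 (by linarith [(gpos x hx).1])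
  refine ⟨f₁, f₂, pos₁, pos₂, (sub_sub_cancel f₁ f).symm, ?_⟩
  have hone : ‖(1 : A)‖ = 1 := CStarRing.norm_one
  have hg1 : |g 1| ≤ C := by simpa [hone] using gb 1
  have hfre : |(f 1).re| ≤ C := by
    have h1 : |(f 1).re| ≤ ‖f 1‖ := by
      exact Complex.abs_re_le_norm _
    have h2 : ‖f 1‖ ≤ C := by simpa [hone] using f.le_opNorm 1
    linarith
  have e₁ : (f₁ 1).re = g 1 := by
    rw [hf₁apply]
    simp
  have e₂ : (f₂ 1).re = g 1 - (f 1).re := by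
    rw [hf₂, ContinuousLinearMap.sub_apply, Complex.sub_re, e₁]
  rw [e₁, e₂]
  rw [abs_le] at hg1 hfre
  linarith [hg1.1, hg1.2, hfre.1, hfre.2]

lemma star_add_smul_one_mul (x : A) (hx : star x = x) (c : ℂ) :
    star (x + c • (1 : A)) * (x + c • (1 : A)) =
      x * x + (starRingEnd ℂ c + c) • x + ((starRingEnd ℂ c) * c) • (1 : A) := by
  rw [star_add, star_smul, hx, star_one]
  rw [add_mul, mul_add, mul_add, smul_mul_assoc, smul_mul_assoc, mul_smul_comm, mul_one,
    one_mul, one_mul, smul_smul, add_smul, Complex.star_def]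
  abel

lemma isPos_of_norm_one [Nontrivial A] (F : A →L[ℂ] ℂ) (hn : ‖F‖ ≤ 1) (h1 : F 1 = 1) :
    IsPosFunctional F ∧ IsHermitianFunctional F := by
  have hone : ‖(1 : A)‖ = 1 := CStarRing.norm_one
  have him : ∀ x : A, IsSelfAdjoint x → (F x).im = 0 := by
    intro x hx
    by_contra hβ
    set α := (F x).re with hα
    set β := (F x).im with hβ'
    set t : ℝ := β⁻¹ * (‖x‖ ^ 2 + 1) / 2 with ht
    set c : ℂ := Complex.I * (t : ℂ) with hc
    set y : A := x + c • (1 : A) with hy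
    have hcc : starRingEnd ℂ c + c = 0 := by
      rw [hc]
      simp [Complex.star_def, map_mul, Complex.conj_I]
      try ring
    have hcc2 : (starRingEnd ℂ c) * c = ((t ^ 2 : ℝ) : ℂ) := by
      rw [hc]
      simp [map_mul, Complex.conj_I, Complex.conj_ofReal]
      push_cast
      ring_nf
      simp [Complex.I_sq]
    have hmul : star y * y = x * x + ((t ^ 2 : ℝ) : ℂ) • (1 : A) := by
      rw [hy, star_add_smul_one_mul x hx.star_eq c, hcc, hcc2, zero_smul, add_zero]
    have hynorm : ‖y‖ ^ 2 ≤ ‖x‖ ^ 2 + t ^ 2 := by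
      have e1 : ‖y‖ ^ 2 = ‖star y * y‖ := by
        rw [CStarRing.norm_star_mul_self]; ring
      rw [e1, hmul]
      calc ‖x * x + ((t^2:ℝ):ℂ) • (1:A)‖ ≤ ‖x * x‖ + ‖((t^2:ℝ):ℂ) • (1:A)‖ := norm_add_le _ _
      _ ≤ ‖x‖ * ‖x‖ + ‖((t^2:ℝ):ℂ)‖ * ‖(1:A)‖ := by
          gcongr
          · exact norm_mul_le x x
          · exact le_of_eq (norm_smul _ _)
      _ = ‖x‖ ^ 2 + t ^ 2 := by
          rw [hone, Complex.norm_real]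
          simp [_root_.abs_of_nonneg (sq_nonneg t)]
          ring
    have hFy : F y = F x + c := by
      rw [hy, map_add, map_smul, h1, smul_eq_mul, mul_one]
    have hFyn : ‖F y‖ ^ 2 ≤ ‖x‖ ^ 2 + t ^ 2 := by
      have := F.le_opNorm y
      have h2 : ‖F y‖ ≤ ‖y‖ := by nlinarith [norm_nonneg y, norm_nonneg (F y)]
      nlinarith [norm_nonneg (F y), norm_nonneg y]
    have hsq : ‖F y‖ ^ 2 = α ^ 2 + (β + t) ^ 2 := by
      rw [hFy, hc]
      rw [Complex.sq_norm, Complex.normSq_apply]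
      simp [hα, hβ']
      ring
    have h2bt : 2 * β * t = ‖x‖ ^ 2 + 1 := by
      rw [ht]
      field_simp
    rw [hsq] at hFyn
    nlinarith [sq_nonneg α, sq_nonneg β]
  have herm : IsHermitianFunctional F := isHermitian_of_real_on_sa F him
  refine ⟨?_, herm⟩
  intro x hx
  have hxsa : IsSelfAdjoint x := IsSelfAdjoint.of_nonneg hx
  have hreal : F x = ((F x).re : ℂ) := herm_real herm hxsa
  have h0 : 0 ≤ algebraMap ℝ A ‖x‖ - x := sub_nonneg.2 hxsa.le_algebraMap_norm_self
  have hb : ‖algebraMap ℝ A ‖x‖ - x‖ ≤ ‖x‖ := by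
    have hle : algebraMap ℝ A ‖x‖ - x ≤ algebraMap ℝ A ‖x‖ := sub_le_self _ hx
    calc ‖algebraMap ℝ A ‖x‖ - x‖ ≤ ‖algebraMap ℝ A ‖x‖‖ :=
        CStarAlgebra.norm_le_norm_of_nonneg_of_le h0 hle
    _ = ‖x‖ := by
        rw [norm_algebraMap']
        exact norm_norm x
  have hFb : ‖F (algebraMap ℝ A ‖x‖ - x)‖ ≤ ‖x‖ := by
    have := F.le_opNorm (algebraMap ℝ A ‖x‖ - x)
    nlinarith [norm_nonneg (algebraMap ℝ A ‖x‖ - x)]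
  have hval : F (algebraMap ℝ A ‖x‖ - x) = ((‖x‖ - (F x).re : ℝ) : ℂ) := by
    rw [map_sub, algebra_apply, h1, mul_one, hreal]
    push_cast [Complex.ofReal_re]
    ring
  rw [hval, Complex.norm_real, Real.norm_eq_abs, abs_le] at hFb
  rw [hreal]
  exact Complex.zero_le_real.2 (by linarith [hFb.1, hFb.2])

/-- The seminorm `r_a` associated with a positive element `a`:
`r_a(f) = inf { f₁(a) + f₂(a) | f = f₁ - f₂, f₁, f₂ positive }`. -/
noncomputable def rSeminorm {A : Type*} [CStarAlgebra A] [PartialOrder A] [StarOrderedRing A]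
    (a : A) (f : A →L[ℂ] ℂ) : ℝ :=
  sInf { r : ℝ | ∃ f₁ f₂ : A →L[ℂ] ℂ, IsPosFunctional f₁ ∧ IsPosFunctional f₂ ∧
    f = f₁ - f₂ ∧ (r : ℂ) = f₁ a + f₂ a }

section RS

variable (a : A)

lemma S_nonneg (ha : 0 ≤ a) {f : A →L[ℂ] ℂ} :
    ∀ r ∈ { r : ℝ | ∃ f₁ f₂ : A →L[ℂ] ℂ, IsPosFunctional f₁ ∧ IsPosFunctional f₂ ∧
      f = f₁ - f₂ ∧ (r : ℂ) = f₁ a + f₂ a }, 0 ≤ r := by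
  rintro r ⟨f₁, f₂, h₁, h₂, hd, hr⟩
  have : (0 : ℂ) ≤ f₁ a + f₂ a := add_nonneg (h₁ a ha) (h₂ a ha)
  rw [← hr] at this
  exact Complex.zero_le_real.mp this

lemma mem_S (ha : 0 ≤ a) {f f₁ f₂ : A →L[ℂ] ℂ} (h₁ : IsPosFunctional f₁) (h₂ : IsPosFunctional f₂)
    (hd : f = f₁ - f₂) :
    ((f₁ a).re + (f₂ a).re) ∈ { r : ℝ | ∃ g₁ g₂ : A →L[ℂ] ℂ, IsPosFunctional g₁ ∧
      IsPosFunctional g₂ ∧ f = g₁ - g₂ ∧ (r : ℂ) = g₁ a + g₂ a } := by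
  refine ⟨f₁, f₂, h₁, h₂, hd, ?_⟩
  have hsa : IsSelfAdjoint a := IsSelfAdjoint.of_nonneg ha
  have e₁ : f₁ a = ((f₁ a).re : ℂ) := re_coe _ (h₁.im_eq_zero hsa)
  have e₂ : f₂ a = ((f₂ a).re : ℂ) := re_coe _ (h₂.im_eq_zero hsa)
  rw [Complex.ofReal_add]
  conv_rhs => rw [e₁, e₂]

lemma rSeminorm_le (ha : 0 ≤ a) {f f₁ f₂ : A →L[ℂ] ℂ} (h₁ : IsPosFunctional f₁) (h₂ : IsPosFunctional f₂)
    (hd : f = f₁ - f₂) : rSeminorm a f ≤ (f₁ a).re + (f₂ a).re :=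
  csInf_le ⟨0, fun r hr => S_nonneg a ha r hr⟩ (mem_S a ha h₁ h₂ hd)

lemma le_rSeminorm (ha : 0 ≤ a) {f f₁ f₂ : A →L[ℂ] ℂ} (h₁ : IsPosFunctional f₁) (h₂ : IsPosFunctional f₂)
    (hd : f = f₁ - f₂) {b : ℝ}
    (hb : ∀ g₁ g₂ : A →L[ℂ] ℂ, IsPosFunctional g₁ → IsPosFunctional g₂ → f = g₁ - g₂ →
      b ≤ (g₁ a).re + (g₂ a).re) :
    b ≤ rSeminorm a f := by
  refine le_csInf ⟨_, mem_S a ha h₁ h₂ hd⟩ ?_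
  rintro r ⟨g₁, g₂, hg₁, hg₂, hgd, hr⟩
  have : r = (g₁ a).re + (g₂ a).re := by
    have := congrArg Complex.re hr
    simpa using this
  exact this ▸ hb g₁ g₂ hg₁ hg₂ hgd

end RS

set_option maxHeartbeats 1000000 in
/-- A positive element `a` is invertible iff `r_a` is equivalent to the dual norm on
hermitian continuous linear functionals. -/
theorem isUnit_iff_rSeminorm_equiv_norm (a : A) (ha : 0 ≤ a) :
    IsUnit a ↔ ∃ c C : ℝ, 0 < c ∧ 0 < C ∧
      ∀ f : A →L[ℂ] ℂ, IsHermitianFunctional f →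
        c * ‖f‖ ≤ rSeminorm a f ∧ rSeminorm a f ≤ C * ‖f‖ := by
  have hsa : IsSelfAdjoint a := IsSelfAdjoint.of_nonneg ha
  constructor
  · intro hu
    rcases subsingleton_or_nontrivial A with hs | hnt
    · refine ⟨1, 1, one_pos, one_pos, fun f _ => ?_⟩
      have hf0 : f = 0 := by ext x; rw [Subsingleton.elim x 0]; simp
      have hz : IsPosFunctional (0 : A →L[ℂ] ℂ) := fun x _ => by simp
      have hd0 : f = 0 - 0 := by rw [hf0, sub_zero]
      have h0mem : ((((0:A →L[ℂ] ℂ) a).re) + (((0:A →L[ℂ] ℂ) a).re)) ∈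
          { r : ℝ | ∃ g₁ g₂ : A →L[ℂ] ℂ, IsPosFunctional g₁ ∧ IsPosFunctional g₂ ∧
            f = g₁ - g₂ ∧ (r : ℂ) = g₁ a + g₂ a } := mem_S a ha hz hz hd0
      have hle : rSeminorm a f ≤ 0 := by
        have := rSeminorm_le a ha hz hz hd0
        simpa using this
      have hge : 0 ≤ rSeminorm a f := le_csInf ⟨_, h0mem⟩ (fun r hr => S_nonneg a ha r hr)
      have : rSeminorm a f = 0 := le_antisymm hle hge
      rw [this, hf0]
      simp
    · have h0 : (0 : ℝ) ∉ spectrum ℝ a := (spectrum.zero_notMem_iff ℝ).mpr hu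
      have hsp : ∀ x ∈ spectrum ℝ a, 0 < x := fun x hx =>
        (spectrum_nonneg_of_nonneg ha hx).lt_of_ne' (fun h => h0 (h ▸ hx))
      obtain ⟨ε, hε, hεa⟩ := (CFC.exists_pos_algebraMap_le_iff (a := a) hsa).mpr hsp
      refine ⟨ε / 2, 3 * (‖a‖ + 1), by positivity, by positivity, fun f hf => ?_⟩
      obtain ⟨f₁, f₂, h₁, h₂, hd, hbound⟩ := exists_decomp f hf
      constructor
      · refine le_rSeminorm a ha h₁ h₂ hd ?_
        intro g₁ g₂ hg₁ hg₂ hgd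
        have l : ∀ g : A →L[ℂ] ℂ, IsPosFunctional g → ε * (g 1).re ≤ (g a).re := by
          intro g hg
          have hm := hg.mono hεa
          rw [algebra_apply] at hm
          rw [Complex.le_def] at hm
          have he : ((ε : ℂ) * g 1).re = ε * (g 1).re := by
            simp [Complex.mul_re, hg.one_re_nonneg.2]
          linarith [hm.1, he.ge, he.le]
        have hnorm : ‖f‖ ≤ 2 * ((g₁ 1).re + (g₂ 1).re) := by
          rw [hgd]; exact norm_sub_le_two hg₁ hg₂
        have l1 := l g₁ hg₁
        have l2 := l g₂ hg₂
        nlinarith [hg₁.one_re_nonneg.1, hg₂.one_re_nonneg.1]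
      · refine (rSeminorm_le a ha h₁ h₂ hd).trans ?_
        have u : ∀ g : A →L[ℂ] ℂ, IsPosFunctional g → (g a).re ≤ ‖a‖ * (g 1).re := by
          intro g hg
          have hm := hg.mono hsa.le_algebraMap_norm_self
          rw [algebra_apply] at hm
          rw [Complex.le_def] at hm
          have he : ((‖a‖ : ℂ) * g 1).re = ‖a‖ * (g 1).re := by
            simp [Complex.mul_re, hg.one_re_nonneg.2]
          linarith [hm.1, he.ge, he.le]
        have u1 := u f₁ h₁
        have u2 := u f₂ h₂
        have ha0 : (0:ℝ) ≤ ‖a‖ := norm_nonneg a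
        have hf0 : (0:ℝ) ≤ ‖f‖ := norm_nonneg f
        nlinarith [h₁.one_re_nonneg.1, h₂.one_re_nonneg.1]
  · rintro ⟨c, C, hc, hC, H⟩
    by_contra hu
    have hnt : Nontrivial A := by
      rcases subsingleton_or_nontrivial A with hs | hnt
      · exact absurd (isUnit_of_subsingleton a) hu
      · exact hnt
    haveI : NormOneClass A := ⟨CStarRing.norm_one⟩
    set p : Submodule ℂ A := ℂ ∙ a with hp
    haveI : IsClosed (p : Set A) := Submodule.closed_of_finiteDimensional p
    have hdist : ∀ m ∈ p, 1 ≤ ‖(1 : A) - m‖ := by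
      rintro m hm
      rw [hp, Submodule.mem_span_singleton] at hm
      obtain ⟨β, rfl⟩ := hm
      have hmem : (1 : ℂ) ∈ spectrum ℂ ((1 : A) - β • a) := by
        rw [spectrum.mem_iff]
        intro hun
        have he : algebraMap ℂ A 1 - ((1 : A) - β • a) = β • a := by
          rw [map_one]; abel
        rw [he] at hun
        rcases eq_or_ne β 0 with hb | hb
        · rw [hb, zero_smul] at hun
          exact not_isUnit_zero hun
        · apply hu
          have he2 : a = β⁻¹ • (β • a) := by rw [smul_smul, inv_mul_cancel₀ hb, one_smul]
          rw [he2]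
          exact hun.smul (Units.mk0 β⁻¹ (by simpa using hb))
      have := spectrum.norm_le_norm_of_mem hmem
      simpa using this
    set x : A ⧸ p := Submodule.Quotient.mk (1 : A) with hxq
    have hxle : ‖x‖ ≤ 1 := by simpa using Submodule.Quotient.norm_mk_le p (1 : A)
    have hxge : 1 ≤ ‖x‖ := by
      by_contra hlt
      push_neg at hlt
      obtain ⟨m, hm, hmlt⟩ := Submodule.Quotient.norm_mk_lt x (by linarith : 0 < 1 - ‖x‖)
      have hp' : (1 : A) - m ∈ p := (Submodule.Quotient.eq p).mp (hxq ▸ hm.symm)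
      have := hdist _ hp'
      rw [sub_sub_cancel] at this
      linarith
    have hxnorm : ‖x‖ = 1 := le_antisymm hxle hxge
    have hxne : x ≠ 0 := by intro h; rw [h, norm_zero] at hxge; linarith
    obtain ⟨gq, hgq1, hgqx⟩ := exists_dual_vector ℂ x (by rw [hxnorm]; norm_num)
    set mkL : A →L[ℂ] (A ⧸ p) := (p.mkQ).mkContinuous 1 (fun m => by
      simpa using Submodule.Quotient.norm_mk_le p m) with hmkL
    have hmkLapp : ∀ y : A, mkL y = Submodule.Quotient.mk y := fun y => rfl
    set F : A →L[ℂ] ℂ := gq.comp mkL with hF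
    have hF1 : F 1 = 1 := by
      rw [hF, ContinuousLinearMap.comp_apply, hmkLapp, ← hxq, hgqx, hxnorm]
      norm_num
    have hFa : F a = 0 := by
      have hmk : mkL a = 0 := by
        rw [hmkLapp]
        exact (Submodule.Quotient.mk_eq_zero p).mpr (Submodule.mem_span_singleton_self a)
      rw [hF, ContinuousLinearMap.comp_apply, hmk, map_zero]
    have hFn : ‖F‖ ≤ 1 := by
      refine ContinuousLinearMap.opNorm_le_bound _ zero_le_one fun y => ?_
      calc ‖F y‖ ≤ ‖gq‖ * ‖mkL y‖ := by
            rw [hF, ContinuousLinearMap.comp_apply]; exact gq.le_opNorm _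
      _ ≤ 1 * ‖y‖ := by
          rw [hgq1, one_mul, one_mul, hmkLapp]
          exact Submodule.Quotient.norm_mk_le p y
    obtain ⟨hpos, hherm⟩ := isPos_of_norm_one F hFn hF1
    have hnorm1 : (1:ℝ) ≤ ‖F‖ := by
      have := F.le_opNorm 1
      rw [hF1, norm_one, norm_one, mul_one] at this
      exact this
    have hr0 : rSeminorm a F ≤ 0 := by
      refine csInf_le ⟨0, fun r hr => S_nonneg a ha r hr⟩ ?_
      refine ⟨F, 0, hpos, fun y _ => le_refl _, by rw [sub_zero], ?_⟩
      rw [ContinuousLinearMap.zero_apply, hFa, add_zero, Complex.ofReal_zero]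
    have hlow := (H F hherm).1
    have hmul : c * 1 ≤ c * ‖F‖ := mul_le_mul_of_nonneg_left hnorm1 hc.le
    linarith
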